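/- Let S be a surjective linear map from ℝⁿ onto ℝʳ and L : ℝᵐ → ℝⁿ a linear map with S L injective. Then there exists a linear map S̄ : ℝⁿ → ℝ^{n−r} such that the combined map x ↦ (S̄ x, S x) is a linear isomorphism ℝⁿ → ℝ^{n−r} × ℝʳ and S̄ L = 0. -/

import Mathlib

theorem exists_complementary_coordinates (n r m : ℕ)
    (hmr : m ≤ r) (hrn : r ≤ n)
    (S : Matrix (Fin r) (Fin n) ℝ) (L : Matrix (Fin n) (Fin m) ℝ)
    (hS : Function.Surjective S.mulVecLin)
    (hSL : Function.Injective (S * L).mulVecLin) :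
    ∃ Sbar : Matrix (Fin (n - r)) (Fin n) ℝ,
      Sbar * L = 0 ∧ Function.Bijective (Matrix.fromRows Sbar S).mulVecLin := by
  classical
  set f := S.mulVecLin with hf
  set g := L.mulVecLin with hg
  have hdisj : Disjoint (LinearMap.range g) (LinearMap.ker f) := by
    rw [disjoint_iff]
    ext x
    simp only [Submodule.mem_inf, Submodule.mem_bot, LinearMap.mem_range, LinearMap.mem_ker]
    constructor
    · rintro ⟨⟨y, rfl⟩, hk⟩
      have : (S * L).mulVecLin y = 0 := by
        rw [Matrix.mulVecLin_mul]; exact hk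
      have hy : y = 0 := hSL (by simpa using this)
      simp [hy]
    · rintro rfl; exact ⟨⟨0, by simp⟩, by simp⟩
  obtain ⟨C, hC⟩ := (LinearMap.range g ⊔ LinearMap.ker f).exists_isCompl
  set W := LinearMap.range g ⊔ C with hW
  have hcompl : IsCompl (LinearMap.ker f) W := by
    constructor
    · rw [disjoint_iff]
      ext x
      simp only [Submodule.mem_inf, Submodule.mem_bot]
      constructor
      · rintro ⟨hxk, hxW⟩
        rw [hW, Submodule.mem_sup] at hxW
        obtain ⟨a, ha, c, hc', rfl⟩ := hxW
        have hcmem : c ∈ (LinearMap.range g ⊔ LinearMap.ker f) ⊓ C := by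
          refine ⟨?_, hc'⟩
          have : c = (a + c) - a := by ring
          rw [this]
          exact Submodule.sub_mem _ (Submodule.mem_sup_right hxk)
            (Submodule.mem_sup_left ha)
        rw [hC.inf_eq_bot] at hcmem
        simp only [Submodule.mem_bot] at hcmem
        subst hcmem
        have : a ∈ LinearMap.range g ⊓ LinearMap.ker f := ⟨ha, by simpa using hxk⟩
        rw [hdisj.eq_bot] at this
        simpa using this
      · rintro rfl; exact ⟨Submodule.zero_mem _, Submodule.zero_mem _⟩
    · rw [codisjoint_iff, hW, ← hC.sup_eq_top]
      ac_rfl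
  have hrange : LinearMap.range f = ⊤ := LinearMap.range_eq_top.mpr hS
  have hker : Module.finrank ℝ (LinearMap.ker f) = n - r := by
    have h1 := LinearMap.finrank_range_add_finrank_ker f
    rw [hrange] at h1
    simp only [finrank_top, Module.finrank_fintype_fun_eq_card, Fintype.card_fin] at h1
    omega
  let e : (LinearMap.ker f) ≃ₗ[ℝ] (Fin (n - r) → ℝ) :=
    LinearEquiv.ofFinrankEq _ _ (by
      rw [hker, Module.finrank_fintype_fun_eq_card, Fintype.card_fin])
  let π := (LinearMap.ker f).linearProjOfIsCompl W hcompl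
  let φ : (Fin n → ℝ) →ₗ[ℝ] (Fin (n - r) → ℝ) := e.toLinearMap ∘ₗ π
  have hA : ∀ v, (LinearMap.toMatrix' φ).mulVec v = φ v := by
    intro v
    rw [← Matrix.toLin'_apply, Matrix.toLin'_toMatrix']
  have hφg : ∀ y, φ (g y) = 0 := by
    intro y
    have hyW : g y ∈ W := Submodule.mem_sup_left (LinearMap.mem_range_self g y)
    have hπ0 : π (g y) = 0 := Submodule.projectionOnto_apply_of_mem_right hcompl hyW
    show e (π (g y)) = 0
    rw [hπ0, map_zero]
  refine ⟨LinearMap.toMatrix' φ, ?_, ?_⟩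
  · ext i j
    have : ((LinearMap.toMatrix' φ) * L).mulVec (Pi.single j 1) i = 0 := by
      rw [← Matrix.mulVec_mulVec, hA]
      have : L.mulVec (Pi.single j 1) = g (Pi.single j 1) := rfl
      rw [this, hφg]
      rfl
    rw [Matrix.mulVec_single] at this
    simpa using this
  · have hinj : Function.Injective (Matrix.fromRows (LinearMap.toMatrix' φ) S).mulVecLin := by
      rw [← LinearMap.ker_eq_bot, Submodule.eq_bot_iff]
      intro x hx
      rw [LinearMap.mem_ker, Matrix.mulVecLin_apply, Matrix.fromRows_mulVec] at hx
      have h1 : φ x = 0 := by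
        rw [← hA]
        funext i₁
        exact congrFun hx (Sum.inl i₁)
      have h2 : f x = 0 := by
        funext i₂
        exact congrFun hx (Sum.inr i₂)
      have hxker : x ∈ LinearMap.ker f := LinearMap.mem_ker.mpr h2
      have hπ : π x = 0 := by
        have h1' : e (π x) = 0 := h1
        have := e.injective (by simpa using h1')
        simpa using this
      have hsub : (⟨x, hxker⟩ : LinearMap.ker f) = 0 := by
        rw [← Submodule.linearProjOfIsCompl_apply_left hcompl ⟨x, hxker⟩]
        exact hπ
      exact congrArg Subtype.val hsub
    refine ⟨hinj, ?_⟩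
    exact (LinearMap.injective_iff_surjective_of_finrank_eq_finrank (by
      simp only [Module.finrank_fintype_fun_eq_card, Fintype.card_fin, Fintype.card_sum]
      omega)).mp hinj
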